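/- Let a1, ..., an be negative integers (each aᵢ < 0). Then there exist infinitely many primes p such that the Legendre symbol (aᵢ/p) = -1 for all i = 1, ..., n. -/

import Mathlib

open ZMod jacobiSym
open scoped NumberTheorySymbols

/-- If `b` is odd and `b ≡ -1 mod 4n` with `n > 0`, then `J(n | b) = 1`. -/
lemma jacobi_eq_one_of_neg_one_mod (n b : ℕ) (hn : 0 < n) (hb : Odd b)
    (hdvd : 4 * n ∣ b + 1) : J((n : ℤ) | b) = 1 := by
  obtain ⟨e, u, hu, rfl⟩ := Nat.exists_eq_two_pow_mul_odd hn.ne'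
  have hu0 : 0 < u := hu.pos
  set N := 2 ^ e * u with hN
  have hN0 : 0 < N := hn
  -- `b ≡ -1 mod u`
  have hudvd : (u : ℤ) ∣ (b : ℤ) + 1 := by
    have : u ∣ 4 * N := ⟨4 * 2 ^ e, by rw [hN]; ring⟩
    exact_mod_cast Int.natCast_dvd_natCast.mpr (this.trans hdvd)
  have hbu : ((b : ℤ)) % u = (-1 : ℤ) % u := by
    have : (b : ℤ) ≡ -1 [ZMOD (u : ℤ)] := by
      symm
      rw [Int.modEq_iff_dvd]
      simpa using hudvd
    exact this
  -- `b % 4 = 3`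
  have hb4 : b % 4 = 3 := by
    have h4 : 4 ∣ b + 1 := (Dvd.intro N rfl).trans hdvd
    omega
  have hbodd : b % 2 = 1 := Nat.odd_iff.mp hb
  -- split
  have hcast : ((N : ℤ)) = (2 : ℤ) ^ e * (u : ℤ) := by push_cast [hN]; ring
  rw [hcast, jacobiSym.mul_left, jacobiSym.pow_left]
  -- odd part
  have hJu : J((u : ℤ) | b) = 1 := by
    rw [jacobiSym.quadratic_reciprocity' hu hb, qrSign, χ₄_nat_three_mod_four hb4,
      jacobiSym.at_neg_one hu, jacobiSym.mod_left' hbu, jacobiSym.at_neg_one hu]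
    rcases Nat.odd_mod_four_iff.mp (Nat.odd_iff.mp hu) with h | h
    · rw [χ₄_nat_one_mod_four h]; ring
    · rw [χ₄_nat_three_mod_four h]; ring
  -- even part
  have hJ2 : J((2 : ℤ) | b) ^ e = 1 := by
    rcases Nat.eq_zero_or_pos e with rfl | he
    · simp
    · have h8 : 8 ∣ 4 * N := by
        obtain ⟨e', rfl⟩ := Nat.exists_eq_succ_of_ne_zero he.ne'
        refine ⟨2 ^ e' * u, by rw [hN, pow_succ]; ring⟩
      have hb8 : b % 8 = 7 := by
        have : 8 ∣ b + 1 := h8.trans hdvd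
        omega
      rw [jacobiSym.at_two hb, χ₈_nat_eq_if_mod_eight]
      simp [hbodd, hb8]
  rw [hJu, hJ2, mul_one]

/-- For negative integers a₁,…,aₙ there are infinitely many primes p with
Legendre symbol (aᵢ/p) = -1 for all i. -/
theorem infinitely_many_primes_nonresidue
    (n : ℕ) (a : Fin n → ℤ) (ha : ∀ i, a i < 0) :
    {p : ℕ | ∃ hp : p.Prime, ∀ i, @legendreSym p ⟨hp⟩ (a i) = -1}.Infinite := by
  set m := ∏ i, (a i).natAbs with hm
  have hm0 : 0 < m := Finset.prod_pos fun i _ => Int.natAbs_pos.mpr (ha i).ne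
  haveI : NeZero (4 * m) := ⟨by omega⟩
  have hu : IsUnit (-1 : ZMod (4 * m)) := isUnit_one.neg
  refine (Nat.infinite_setOfPred_prime_and_eq_mod hu).mono ?_
  rintro p ⟨hp, hmod⟩
  have hdvd : 4 * m ∣ p + 1 := by
    have : ((p + 1 : ℕ) : ZMod (4 * m)) = 0 := by push_cast [hmod]; ring
    exact (ZMod.natCast_eq_zero_iff _ _).mp this
  have hp4 : p % 4 = 3 := by
    have h4 : 4 ∣ p + 1 := (Dvd.intro m rfl).trans hdvd
    omega
  have hpodd : Odd p := Nat.odd_iff.mpr (by omega)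
  refine ⟨hp, fun i => ?_⟩
  haveI : Fact p.Prime := ⟨hp⟩
  rw [legendreSym.to_jacobiSym]
  set k := (a i).natAbs with hk
  have hk0 : 0 < k := Int.natAbs_pos.mpr (ha i).ne
  have hai : a i = -(k : ℤ) := by
    have h1 : (k : ℤ) = |a i| := Int.natCast_natAbs (a i) ▸ rfl
    have h2 : |a i| = -(a i) := abs_of_neg (ha i)
    omega
  have hdn : 4 * k ∣ p + 1 :=
    (mul_dvd_mul_left 4 (Finset.dvd_prod_of_mem _ (Finset.mem_univ i))).trans hdvd
  rw [hai, jacobiSym.neg _ hpodd, χ₄_nat_three_mod_four hp4,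
    jacobi_eq_one_of_neg_one_mod k p hk0 hpodd hdn]
  ring
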